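/- Let μ be a probability distribution on R^3 that is centrally symmetric (invariant under x ↦ -x) and non-degenerate (every plane through the origin has μ-measure zero). If w_1, w_2, w_3, w_4 are independent μ-random vectors, then the probability that 0 lies in the interior of the convex hull of {w_1,w_2,w_3,w_4} equals 1/8. -/

import Mathlib

open MeasureTheory Set

namespace Wendel

noncomputable section

/-- dot product on `Fin 3 → ℝ` -/
def dot (u x : Fin 3 → ℝ) : ℝ := ∑ j, u j * x j

lemma dot_smul_right (u x : Fin 3 → ℝ) (r : ℝ) : dot u (r • x) = r * dot u x := by
  simp only [dot, Pi.smul_apply, smul_eq_mul, Finset.mul_sum]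
  exact Finset.sum_congr rfl fun j _ => by ring

lemma dot_smul_left (u x : Fin 3 → ℝ) (r : ℝ) : dot (r • u) x = r * dot u x := by
  simp only [dot, Pi.smul_apply, smul_eq_mul, Finset.mul_sum]
  exact Finset.sum_congr rfl fun j _ => by ring

lemma dot_add_right (u x y : Fin 3 → ℝ) : dot u (x + y) = dot u x + dot u y := by
  simp only [dot, Pi.add_apply, mul_add, Finset.sum_add_distrib]

lemma dot_sum_right {n : ℕ} (u : Fin 3 → ℝ) (f : Fin n → (Fin 3 → ℝ)) :
    dot u (∑ i, f i) = ∑ i, dot u (f i) := by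
  simp only [dot, Finset.sum_apply, Finset.mul_sum]
  exact Finset.sum_comm

lemma dot_self_eq_zero {u : Fin 3 → ℝ} (h : dot u u = 0) : u = 0 := by
  have h2 : ∀ j ∈ Finset.univ, (0:ℝ) ≤ u j * u j := fun j _ => mul_self_nonneg _
  funext j
  have := (Finset.sum_eq_zero_iff_of_nonneg h2).mp h j (Finset.mem_univ j)
  exact mul_self_eq_zero.mp this

lemma abs_dot_le (u x : Fin 3 → ℝ) : |dot u x| ≤ 3 * (‖u‖ * ‖x‖) := by
  calc |dot u x| ≤ ∑ j, |u j * x j| := Finset.abs_sum_le_sum_abs _ _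
    _ ≤ ∑ _j : Fin 3, ‖u‖ * ‖x‖ := by
        refine Finset.sum_le_sum fun j _ => ?_
        rw [abs_mul]
        have h1 : |u j| ≤ ‖u‖ := by
          simpa [Real.norm_eq_abs] using norm_le_pi_norm u j
        have h2 : |x j| ≤ ‖x‖ := by
          simpa [Real.norm_eq_abs] using norm_le_pi_norm x j
        exact mul_le_mul h1 h2 (abs_nonneg _) (norm_nonneg _)
    _ = 3 * (‖u‖ * ‖x‖) := by simp [Finset.sum_const]

lemma dot_continuous (x : Fin 3 → ℝ) : Continuous fun u => dot u x := by
  unfold dot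
  exact continuous_finset_sum _ fun j _ => (continuous_apply j).mul continuous_const

/-- convex hull is contained in a halfspace -/
lemma convexHull_subset_halfspace {n : ℕ} {v : Fin n → (Fin 3 → ℝ)} {u : Fin 3 → ℝ} {c : ℝ}
    (h : ∀ i, c ≤ dot u (v i)) : convexHull ℝ (Set.range v) ⊆ {x | c ≤ dot u x} := by
  apply convexHull_min
  · rintro x ⟨i, rfl⟩; exact h i
  · intro x hx y hy a b ha hb hab
    simp only [mem_setOf_eq] at *
    have : dot u (a • x + b • y) = a * dot u x + b * dot u y := by
      rw [dot_add_right, dot_smul_right, dot_smul_right]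
    rw [this]
    calc c = a * c + b * c := by rw [← add_mul, hab, one_mul]
      _ ≤ a * dot u x + b * dot u y :=
        add_le_add (mul_le_mul_of_nonneg_left hx ha) (mul_le_mul_of_nonneg_left hy hb)

/-- decomposition of a convex hull member with `Fin n` weights -/
lemma exists_weights {n : ℕ} (hn : 0 < n) {V : Type*} [AddCommGroup V] [Module ℝ V] (v : Fin n → V) {x : V}
    (hx : x ∈ convexHull ℝ (Set.range v)) :
    ∃ lam : Fin n → ℝ, (∀ i, 0 ≤ lam i) ∧ ∑ i, lam i = 1 ∧ ∑ i, lam i • v i = x := by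
  classical
  rw [convexHull_eq] at hx
  obtain ⟨ι, t, wt, z, hw0, hw1, hz, hx⟩ := hx
  have hg : ∀ a ∈ t, ∃ m, v m = z a := fun a ha => hz a ha
  choose g hgv using fun (a : ι) (ha : a ∈ t) => hg a ha
  set G : ι → Fin n := fun a => if ha : a ∈ t then g a ha else ⟨0, hn⟩ with hG
  have hGv : ∀ a ∈ t, v (G a) = z a := by
    intro a ha; simp only [hG, dif_pos ha]; exact hgv a ha
  refine ⟨fun i => ∑ a ∈ t.filter (fun a => G a = i), wt a, ?_, ?_, ?_⟩
  · intro i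
    exact Finset.sum_nonneg fun a ha => hw0 a (Finset.mem_filter.mp ha).1
  · rw [Finset.sum_fiberwise_of_maps_to (fun a _ => Finset.mem_univ (G a))]
    exact hw1
  · have key : ∀ i : Fin n, (∑ a ∈ t.filter (fun a => G a = i), wt a) • v i
        = ∑ a ∈ t.filter (fun a => G a = i), wt a • z a := by
      intro i
      rw [Finset.sum_smul]
      refine Finset.sum_congr rfl fun a ha => ?_
      obtain ⟨hat, hgi⟩ := Finset.mem_filter.mp ha
      rw [← hGv a hat, hgi]
    calc ∑ i, (∑ a ∈ t.filter (fun a => G a = i), wt a) • v i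
        = ∑ i, ∑ a ∈ t.filter (fun a => G a = i), wt a • z a :=
          Finset.sum_congr rfl fun i _ => key i
      _ = ∑ a ∈ t, wt a • z a :=
          Finset.sum_fiberwise_of_maps_to (fun a _ => Finset.mem_univ (G a)) _
      _ = x := by rw [← hx, Finset.centerMass_eq_of_sum_1 _ _ hw1]

/-- Quantitative characterization, forward direction. -/
lemma delta_of_mem_interior {v : Fin 4 → (Fin 3 → ℝ)}
    (h : (0 : Fin 3 → ℝ) ∈ interior (convexHull ℝ (Set.range v))) :
    ∃ δ > 0, ∀ u : Fin 3 → ℝ, ‖u‖ = 1 → ∃ i, dot u (v i) ≤ -δ := by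
  rw [mem_interior_iff_mem_nhds, Metric.mem_nhds_iff] at h
  obtain ⟨ε, hε, hball⟩ := h
  refine ⟨ε/2, by linarith, fun u hu => ?_⟩
  by_contra hcon
  push_neg at hcon
  -- min of the four dot products
  set m : ℝ := min (min (dot u (v 0)) (dot u (v 1))) (min (dot u (v 2)) (dot u (v 3))) with hm
  have hmle : ∀ i, m ≤ dot u (v i) := by
    intro i
    fin_cases i
    · exact le_trans (min_le_left _ _) (min_le_left _ _)
    · exact le_trans (min_le_left _ _) (min_le_right _ _)
    · exact le_trans (min_le_right _ _) (min_le_left _ _)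
    · exact le_trans (min_le_right _ _) (min_le_right _ _)
  have hmgt : -(ε/2) < m := by
    rw [hm]
    simp only [lt_min_iff]
    exact ⟨⟨hcon 0, hcon 1⟩, ⟨hcon 2, hcon 3⟩⟩
  -- the point y
  set y : Fin 3 → ℝ := (-(ε/2)) • u with hy
  have hymem : y ∈ convexHull ℝ (Set.range v) := by
    apply hball
    rw [mem_ball_zero_iff, hy, norm_smul, hu]
    simp [abs_of_pos hε, half_lt_self hε]
  have h1 : m ≤ dot u y := convexHull_subset_halfspace hmle hymem
  -- but dot u y = -(ε/2) * dot u u ≤ -(ε/2)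
  have hduu : 1 ≤ dot u u := by
    -- some coordinate has |u j| = ‖u‖ = 1
    obtain ⟨j, hj⟩ : ∃ j, |u j| = 1 := by
      have hnn : (Finset.univ : Finset (Fin 3)).Nonempty := ⟨0, Finset.mem_univ 0⟩
      obtain ⟨j, _, hj⟩ := Finset.exists_mem_eq_sup Finset.univ hnn (fun j => ‖u j‖₊)
      refine ⟨j, ?_⟩
      have : ‖u‖₊ = ‖u j‖₊ := by rw [← hj]; rfl
      have h' : ‖u j‖ = 1 := by
        rw [← coe_nnnorm, ← this, coe_nnnorm, hu]
      simpa [Real.norm_eq_abs] using h'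
    calc (1:ℝ) = |u j| * |u j| := by rw [hj]; ring
      _ = u j * u j := abs_mul_abs_self _
      _ ≤ ∑ j', u j' * u j' := Finset.single_le_sum (fun j' _ => mul_self_nonneg (u j'))
          (Finset.mem_univ j)
      _ = dot u u := rfl
  have h2 : dot u y = -(ε/2) * dot u u := by rw [hy, dot_smul_right]
  nlinarith
/-- Quantitative characterization, backward direction. -/
lemma mem_interior_of_delta {v : Fin 4 → (Fin 3 → ℝ)} {δ : ℝ} (hδ : 0 < δ)
    (h : ∀ u : Fin 3 → ℝ, ‖u‖ = 1 → ∃ i, dot u (v i) ≤ -δ) :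
    (0 : Fin 3 → ℝ) ∈ interior (convexHull ℝ (Set.range v)) := by
  have hsub : Metric.ball (0 : Fin 3 → ℝ) (δ/3) ⊆ convexHull ℝ (Set.range v) := by
    intro y hy
    rw [mem_ball_zero_iff] at hy
    by_contra hnc
    have hcl : IsClosed (convexHull ℝ (Set.range v)) :=
      ((Set.finite_range v).isCompact_convexHull ℝ).isClosed
    obtain ⟨f, r, hfy, hfb⟩ :=
      geometric_hahn_banach_point_closed (convex_convexHull ℝ _) hcl hnc
    set u₀ : Fin 3 → ℝ := fun j => f (fun j' => if j = j' then 1 else 0) with hu₀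
    have hfx : ∀ x : Fin 3 → ℝ, f x = dot u₀ x := by
      intro x
      have := (f : (Fin 3 → ℝ) →ₗ[ℝ] ℝ).pi_apply_eq_sum_univ x
      simp only [ContinuousLinearMap.coe_coe] at this
      rw [this, dot]
      exact Finset.sum_congr rfl fun j _ => by rw [smul_eq_mul, hu₀]; ring
    have hu₀ne : u₀ ≠ 0 := by
      intro h0
      have h1 : f y < r := hfy
      have h2 : r < f (v 0) := hfb _ (subset_convexHull ℝ _ ⟨0, rfl⟩)
      rw [hfx, h0] at h1 h2
      simp [dot] at h1 h2
      linarith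
    have hn0 : (0:ℝ) < ‖u₀‖ := norm_pos_iff.mpr hu₀ne
    set u₁ : Fin 3 → ℝ := ‖u₀‖⁻¹ • u₀ with hu₁
    have hu₁n : ‖u₁‖ = 1 := by
      rw [hu₁, norm_smul, norm_inv, norm_norm, inv_mul_cancel₀ (ne_of_gt hn0)]
    obtain ⟨i, hi⟩ := h u₁ hu₁n
    have hd : dot u₀ (v i) ≤ -δ * ‖u₀‖ := by
      have : dot u₁ (v i) = ‖u₀‖⁻¹ * dot u₀ (v i) := by rw [hu₁, dot_smul_left]
      rw [this] at hi
      have := mul_le_mul_of_nonneg_left hi (le_of_lt hn0)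
      rw [mul_comm (-δ) ‖u₀‖]
      calc dot u₀ (v i) = ‖u₀‖ * (‖u₀‖⁻¹ * dot u₀ (v i)) := by
            field_simp
        _ ≤ ‖u₀‖ * (-δ) := this
    have hrlt : r < -δ * ‖u₀‖ := lt_of_lt_of_le (by rw [← hfx]; exact hfb _ (subset_convexHull ℝ _ ⟨i, rfl⟩)) hd
    have hylb : -(3 * (‖u₀‖ * ‖y‖)) ≤ f y := by
      rw [hfx]
      have := abs_dot_le u₀ y
      have := neg_abs_le (dot u₀ y)
      linarith
    have hbound : 3 * (‖u₀‖ * ‖y‖) < δ * ‖u₀‖ := by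
      have hyn : ‖y‖ < δ/3 := hy
      nlinarith [norm_nonneg y]
    linarith [hfy]
  exact mem_interior.mpr ⟨Metric.ball 0 (δ/3), hsub, Metric.isOpen_ball,
    Metric.mem_ball_self (by linarith)⟩

/-- compactness upgrade: pointwise negativity to uniform δ. -/
lemma uniform_delta {v : Fin 4 → (Fin 3 → ℝ)}
    (h : ∀ u : Fin 3 → ℝ, ‖u‖ = 1 → ∃ i, dot u (v i) < 0) :
    ∃ δ > 0, ∀ u : Fin 3 → ℝ, ‖u‖ = 1 → ∃ i, dot u (v i) ≤ -δ := by
  set m : (Fin 3 → ℝ) → ℝ := fun u =>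
    min (min (dot u (v 0)) (dot u (v 1))) (min (dot u (v 2)) (dot u (v 3))) with hm
  have hcont : Continuous m :=
    (((dot_continuous (v 0)).min (dot_continuous (v 1))).min
      ((dot_continuous (v 2)).min (dot_continuous (v 3))))
  have hsph : IsCompact (Metric.sphere (0 : Fin 3 → ℝ) 1) := isCompact_sphere 0 1
  have hne : (Metric.sphere (0 : Fin 3 → ℝ) 1).Nonempty := by
    refine ⟨fun _ => 1, ?_⟩
    simp [mem_sphere_zero_iff_norm]
  obtain ⟨u₀, hu₀mem, hu₀max⟩ := hsph.exists_isMaxOn hne hcont.continuousOn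
  have hu₀n : ‖u₀‖ = 1 := by simpa [mem_sphere_zero_iff_norm] using hu₀mem
  have hmneg : m u₀ < 0 := by
    obtain ⟨i, hi⟩ := h u₀ hu₀n
    have : m u₀ ≤ dot u₀ (v i) := by
      fin_cases i
      · exact le_trans (min_le_left _ _) (min_le_left _ _)
      · exact le_trans (min_le_left _ _) (min_le_right _ _)
      · exact le_trans (min_le_right _ _) (min_le_left _ _)
      · exact le_trans (min_le_right _ _) (min_le_right _ _)
    linarith
  refine ⟨-(m u₀), by linarith, fun u hu => ?_⟩
  have hle : m u ≤ m u₀ := hu₀max (by simp [mem_sphere_zero_iff_norm, hu])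
  have : m u ≤ -(-(m u₀)) := by linarith
  rw [hm] at this
  simp only [min_le_iff] at this
  rcases this with (h' | h') | (h' | h')
  exacts [⟨0, h'⟩, ⟨1, h'⟩, ⟨2, h'⟩, ⟨3, h'⟩]

/-- The clean characterization. -/
lemma mem_interior_iff (v : Fin 4 → (Fin 3 → ℝ)) :
    (0 : Fin 3 → ℝ) ∈ interior (convexHull ℝ (Set.range v)) ↔
      ∀ u : Fin 3 → ℝ, ‖u‖ = 1 → ∃ i, dot u (v i) < 0 := by
  constructor
  · intro h u hu
    obtain ⟨δ, hδ, h'⟩ := delta_of_mem_interior h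
    obtain ⟨i, hi⟩ := h' u hu
    exact ⟨i, by linarith⟩
  · intro h
    obtain ⟨δ, hδ, h'⟩ := uniform_delta h
    exact mem_interior_of_delta hδ h'

/-- The event set is open. -/
lemma isOpen_event :
    IsOpen {w : Fin 4 → (Fin 3 → ℝ) |
      (0 : Fin 3 → ℝ) ∈ interior (convexHull ℝ (Set.range w))} := by
  rw [Metric.isOpen_iff]
  intro w hw
  simp only [mem_setOf_eq] at hw
  obtain ⟨δ, hδ, h⟩ := delta_of_mem_interior hw
  refine ⟨δ/6, by linarith, fun w' hw' => ?_⟩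
  simp only [mem_setOf_eq]
  rw [mem_interior_iff]
  intro u hu
  obtain ⟨i, hi⟩ := h u hu
  have hdiff : |dot u (w' i) - dot u (w i)| ≤ 3 * (‖u‖ * ‖w' i - w i‖) := by
    have : dot u (w' i) - dot u (w i) = dot u (w' i - w i) := by
      have := dot_add_right u (w' i - w i) (w i)
      simp only [sub_add_cancel] at this
      linarith
    rw [this]
    exact abs_dot_le _ _
  have hni : ‖w' i - w i‖ ≤ dist w' w := by
    rw [dist_eq_norm]
    exact norm_le_pi_norm (w' - w) i
  rw [Metric.mem_ball] at hw'
  refine ⟨i, ?_⟩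
  have h1 : dot u (w' i) - dot u (w i) ≤ |dot u (w' i) - dot u (w i)| := le_abs_self _
  rw [hu] at hdiff
  nlinarith

/-- general position -/
def GP (w : Fin 4 → (Fin 3 → ℝ)) : Prop :=
  ∀ i j k : Fin 4, i ≠ j → i ≠ k → j ≠ k → LinearIndependent ℝ ![w i, w j, w k]

lemma span_top_of_li {w : Fin 4 → (Fin 3 → ℝ)}
    (hli : LinearIndependent ℝ ![w 0, w 1, w 2]) :
    Submodule.span ℝ (Set.range ![w 0, w 1, w 2]) = ⊤ := by
  apply Submodule.eq_top_of_finrank_eq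
  have h1 := linearIndependent_iff_card_eq_finrank_span.mp hli
  simp only [Fintype.card_fin] at h1
  have h2 : Module.finrank ℝ (Fin 3 → ℝ) = 3 := by
    simp [Module.finrank_fintype_fun_eq_card]
  rw [h2]
  simpa [Set.finrank] using h1.symm

lemma dot_eq_zero_of_span {w : Fin 4 → (Fin 3 → ℝ)} {u : Fin 3 → ℝ}
    (hli : LinearIndependent ℝ ![w 0, w 1, w 2])
    (h : ∀ i : Fin 4, dot u (w i) = 0) : u = 0 := by
  set φ : (Fin 3 → ℝ) →ₗ[ℝ] ℝ :=
    { toFun := fun x => dot u x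
      map_add' := fun x y => dot_add_right u x y
      map_smul' := fun r x => by simp [dot_smul_right] } with hφ
  have hker : Submodule.span ℝ (Set.range ![w 0, w 1, w 2]) ≤ LinearMap.ker φ := by
    rw [Submodule.span_le]
    rintro x ⟨m, rfl⟩
    fin_cases m
    · simpa [hφ] using h 0
    · simpa [hφ] using h 1
    · simpa [hφ] using h 2
  rw [span_top_of_li hli] at hker
  have : φ u = 0 := hker (Submodule.mem_top)
  exact dot_self_eq_zero this

/-- existence and uniqueness of the linear relation -/
lemma exists_relation {w : Fin 4 → (Fin 3 → ℝ)} (hgp : GP w) :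
    ∃ c : Fin 4 → ℝ, (∀ i, c i ≠ 0) ∧ (∑ i, c i • w i = 0) ∧
      (∀ e : Fin 4 → ℝ, ∑ i, e i • w i = 0 → ∃ t : ℝ, ∀ i, e i = t * c i) := by
  have li012 : LinearIndependent ℝ ![w 0, w 1, w 2] :=
    hgp 0 1 2 (by decide) (by decide) (by decide)
  have li123 : LinearIndependent ℝ ![w 1, w 2, w 3] :=
    hgp 1 2 3 (by decide) (by decide) (by decide)
  have li023 : LinearIndependent ℝ ![w 0, w 2, w 3] :=
    hgp 0 2 3 (by decide) (by decide) (by decide)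
  have li013 : LinearIndependent ℝ ![w 0, w 1, w 3] :=
    hgp 0 1 3 (by decide) (by decide) (by decide)
  have hmem : w 3 ∈ Submodule.span ℝ (Set.range ![w 0, w 1, w 2]) := by
    rw [span_top_of_li li012]; exact Submodule.mem_top
  rw [Submodule.mem_span_range_iff_exists_fun] at hmem
  obtain ⟨d, hd⟩ := hmem
  rw [Fin.sum_univ_three] at hd
  simp only [Matrix.cons_val_zero, Matrix.cons_val_one, Matrix.head_cons,
    Matrix.cons_val_two, Matrix.tail_cons] at hd
  -- hd : d 0 • w 0 + d 1 • w 1 + d 2 • w 2 = w 3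
  refine ⟨![d 0, d 1, d 2, -1], ?_, ?_, ?_⟩
  · intro i
    fin_cases i
    · -- d 0 ≠ 0
      show d 0 ≠ 0
      intro h0
      rw [h0] at hd
      have := Fintype.linearIndependent_iff.mp li123 ![d 1, d 2, -1] (by
        rw [Fin.sum_univ_three]
        simp only [Matrix.cons_val_zero, Matrix.cons_val_one, Matrix.head_cons,
          Matrix.cons_val_two, Matrix.tail_cons]
        rw [neg_one_smul]
        rw [zero_smul, zero_add] at hd
        rw [← hd]; abel)
      have h2 := this 2
      norm_num [Matrix.cons_val_two, Matrix.tail_cons, Matrix.head_cons] at h2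
    · show d 1 ≠ 0
      intro h0
      rw [h0] at hd
      have := Fintype.linearIndependent_iff.mp li023 ![d 0, d 2, -1] (by
        rw [Fin.sum_univ_three]
        simp only [Matrix.cons_val_zero, Matrix.cons_val_one, Matrix.head_cons,
          Matrix.cons_val_two, Matrix.tail_cons]
        rw [neg_one_smul]
        rw [zero_smul] at hd
        rw [← hd]; abel)
      have h2 := this 2
      norm_num [Matrix.cons_val_two, Matrix.tail_cons, Matrix.head_cons] at h2
    · show d 2 ≠ 0
      intro h0
      rw [h0] at hd
      have := Fintype.linearIndependent_iff.mp li013 ![d 0, d 1, -1] (by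
        rw [Fin.sum_univ_three]
        simp only [Matrix.cons_val_zero, Matrix.cons_val_one, Matrix.head_cons,
          Matrix.cons_val_two, Matrix.tail_cons]
        rw [neg_one_smul]
        rw [zero_smul, add_zero] at hd
        rw [← hd]; abel)
      have h2 := this 2
      norm_num [Matrix.cons_val_two, Matrix.tail_cons, Matrix.head_cons] at h2
    · show (-1 : ℝ) ≠ 0
      norm_num
  · rw [Fin.sum_univ_four]
    simp only [Matrix.cons_val_zero, Matrix.cons_val_one, Matrix.head_cons,
      Matrix.cons_val_two, Matrix.tail_cons, Matrix.cons_val_three]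
    rw [neg_one_smul, ← hd]; abel
  · intro e he
    rw [Fin.sum_univ_four] at he
    have hsum : (e 0 + e 3 * d 0) • w 0 + (e 1 + e 3 * d 1) • w 1
        + (e 2 + e 3 * d 2) • w 2 = 0 := by
      have h3 : e 3 • w 3 = e 3 • (d 0 • w 0 + d 1 • w 1 + d 2 • w 2) := by rw [hd]
      rw [smul_add, smul_add, smul_smul, smul_smul, smul_smul] at h3
      rw [add_smul, add_smul, add_smul]
      calc e 0 • w 0 + (e 3 * d 0) • w 0 + (e 1 • w 1 + (e 3 * d 1) • w 1)
            + (e 2 • w 2 + (e 3 * d 2) • w 2)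
          = (e 0 • w 0 + e 1 • w 1 + e 2 • w 2 + e 3 • w 3) := by rw [h3]; abel
        _ = 0 := he
    have := Fintype.linearIndependent_iff.mp li012
      ![e 0 + e 3 * d 0, e 1 + e 3 * d 1, e 2 + e 3 * d 2] (by
        rw [Fin.sum_univ_three]
        simp only [Matrix.cons_val_zero, Matrix.cons_val_one, Matrix.head_cons,
          Matrix.cons_val_two, Matrix.tail_cons]
        exact hsum)
    refine ⟨-(e 3), fun i => ?_⟩
    fin_cases i
    · have h0 := this 0
      simp only [Matrix.cons_val_zero] at h0
      show e 0 = -e 3 * d 0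
      linarith
    · have h1 := this 1
      simp only [Matrix.cons_val_one, Matrix.head_cons, Matrix.cons_val_zero] at h1
      show e 1 = -e 3 * d 1
      linarith
    · have h2 := this 2
      simp only [Matrix.cons_val_two, Matrix.tail_cons, Matrix.head_cons] at h2
      show e 2 = -e 3 * d 2
      linarith
    · show e 3 = -e 3 * (-1)
      ring

def sg (b : Bool) : ℝ := if b then 1 else -1

lemma sg_mul_self (b : Bool) : sg b * sg b = 1 := by cases b <;> norm_num [sg]

lemma sg_ne_zero (b : Bool) : sg b ≠ 0 := by cases b <;> norm_num [sg]

lemma if_eq_sg_smul (b : Bool) (x : Fin 3 → ℝ) : (if b then x else -x) = sg b • x := by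
  cases b <;> simp [sg]

lemma mem_int_of_pos {w : Fin 4 → (Fin 3 → ℝ)} {c s : Fin 4 → ℝ}
    (hrel : ∑ i, c i • w i = 0) (hpos : ∀ i, 0 < s i * c i) (hs : ∀ i, s i * s i = 1)
    (hspan : ∀ u : Fin 3 → ℝ, (∀ i, dot u (w i) = 0) → u = 0) :
    (0 : Fin 3 → ℝ) ∈ interior (convexHull ℝ (Set.range fun i => s i • w i)) := by
  rw [mem_interior_iff]
  intro u hu
  by_contra hcon
  push_neg at hcon
  have hterm : ∀ i, (s i * c i) * dot u (s i • w i) = c i * dot u (w i) := by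
    intro i
    rw [dot_smul_right]
    linear_combination (c i * dot u (w i)) * hs i
  have hsum0 : ∑ i, (s i * c i) * dot u (s i • w i) = 0 := by
    have h1 : ∑ i, (s i * c i) * dot u (s i • w i) = ∑ i, c i * dot u (w i) :=
      Finset.sum_congr rfl fun i _ => hterm i
    have h2 : ∑ i, c i * dot u (w i) = dot u (∑ i, c i • w i) := by
      rw [dot_sum_right]
      exact (Finset.sum_congr rfl fun i _ => (dot_smul_right u (w i) (c i)).symm)
    rw [h1, h2, hrel]
    simp [dot]
  have hzero : ∀ i ∈ Finset.univ, (s i * c i) * dot u (s i • w i) = 0 :=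
    (Finset.sum_eq_zero_iff_of_nonneg
      (fun i _ => mul_nonneg (le_of_lt (hpos i)) (hcon i))).mp hsum0
  have hdw : ∀ i, dot u (w i) = 0 := by
    intro i
    have h0 := hzero i (Finset.mem_univ i)
    have h1 : dot u (s i • w i) = 0 :=
      (mul_eq_zero.mp h0).resolve_left (ne_of_gt (hpos i))
    rw [dot_smul_right] at h1
    have hsne : s i ≠ 0 := by
      intro h'
      have := hs i
      rw [h'] at this
      norm_num at this
    exact (mul_eq_zero.mp h1).resolve_left hsne
  have := hspan u hdw
  rw [this] at hu
  simp at hu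

lemma signs_of_mem {w : Fin 4 → (Fin 3 → ℝ)} {c s : Fin 4 → ℝ}
    (hc0 : ∀ i, c i ≠ 0)
    (huniq : ∀ e : Fin 4 → ℝ, ∑ i, e i • w i = 0 → ∃ t : ℝ, ∀ i, e i = t * c i)
    (hs : ∀ i, s i * s i = 1)
    (h : (0 : Fin 3 → ℝ) ∈ interior (convexHull ℝ (Set.range fun i => s i • w i))) :
    (∀ i, 0 < s i * c i) ∨ (∀ i, s i * c i < 0) := by
  have hmem := interior_subset h
  obtain ⟨lam, hlam0, hlam1, hlams⟩ := exists_weights (by norm_num) _ hmem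
  set e : Fin 4 → ℝ := fun i => lam i * s i with he
  have herel : ∑ i, e i • w i = 0 := by
    rw [← hlams]
    refine Finset.sum_congr rfl fun i _ => ?_
    rw [he, smul_smul]
  obtain ⟨t, ht⟩ := huniq e herel
  have hlam : ∀ i, lam i = t * (s i * c i) := by
    intro i
    have h1 : lam i = e i * s i := by
      rw [he]
      show lam i = lam i * s i * s i
      linear_combination (-(lam i)) * hs i
    rw [h1, ht i]
    ring
  have htne : t ≠ 0 := by
    intro h0
    have : ∀ i, lam i = 0 := fun i => by rw [hlam i, h0, zero_mul]
    rw [Finset.sum_congr rfl fun i _ => this i] at hlam1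
    simp at hlam1
  have hlampos : ∀ i, 0 < lam i := by
    intro i
    refine lt_of_le_of_ne (hlam0 i) (Ne.symm ?_)
    rw [hlam i]
    exact mul_ne_zero htne (mul_ne_zero (fun h' => by
      have := hs i; rw [h'] at this; norm_num at this) (hc0 i))
  rcases lt_or_gt_of_ne htne with hneg | hpos
  · right
    intro i
    nlinarith [hlampos i, hlam i]
  · left
    intro i
    nlinarith [hlampos i, hlam i]

open scoped Classical in
/-- The counting lemma: exactly 2 sign patterns put 0 in the interior. -/
lemma count_sum {w : Fin 4 → (Fin 3 → ℝ)} (hgp : GP w) :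
    ∑ σ : Fin 4 → Bool,
      (if (0 : Fin 3 → ℝ) ∈ interior (convexHull ℝ
          (Set.range fun i => if σ i then w i else -(w i))) then (1 : ENNReal) else 0) = 2 := by
  classical
  obtain ⟨c, hc0, hrel, huniq⟩ := exists_relation hgp
  have li012 : LinearIndependent ℝ ![w 0, w 1, w 2] :=
    hgp 0 1 2 (by decide) (by decide) (by decide)
  have hspan : ∀ u : Fin 3 → ℝ, (∀ i, dot u (w i) = 0) → u = 0 :=
    fun u hu => dot_eq_zero_of_span li012 hu
  set σp : Fin 4 → Bool := fun i => decide (0 < c i) with hσp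
  set σm : Fin 4 → Bool := fun i => decide (c i < 0) with hσm
  have key : ∀ σ : Fin 4 → Bool,
      ((0 : Fin 3 → ℝ) ∈ interior (convexHull ℝ
        (Set.range fun i => if σ i then w i else -(w i)))) ↔ (σ = σp ∨ σ = σm) := by
    intro σ
    have hrange : (fun i => if σ i then w i else -(w i)) = fun i => sg (σ i) • w i :=
      funext fun i => if_eq_sg_smul _ _
    rw [hrange]
    have hs : ∀ i, sg (σ i) * sg (σ i) = 1 := fun i => sg_mul_self _
    constructor
    · intro h
      rcases signs_of_mem hc0 huniq hs h with hpos | hneg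
      · left
        funext i
        have hp := hpos i
        cases hb : σ i with
        | true =>
          have hcpos : (0:ℝ) < c i := by
            rw [hb] at hp; simp [sg] at hp; linarith
          simp [hσp, hcpos]
        | false =>
          have hcneg : c i < 0 := by
            rw [hb] at hp; simp [sg] at hp; linarith
          simp [hσp, not_lt.mpr hcneg.le]
      · right
        funext i
        have hp := hneg i
        cases hb : σ i with
        | true =>
          have hcneg : c i < 0 := by
            rw [hb] at hp; simp [sg] at hp; linarith
          simp [hσm, hcneg]
        | false =>
          have hcpos : (0:ℝ) < c i := by
            rw [hb] at hp; simp [sg] at hp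
            rcases (hc0 i).lt_or_gt with h' | h'
            · exfalso; linarith
            · exact h'
          simp [hσm, not_lt.mpr hcpos.le]
    · rintro (rfl | rfl)
      · refine mem_int_of_pos hrel (fun i => ?_) hs hspan
        by_cases h' : 0 < c i
        · simp [hσp, sg, h']
        · have hcneg : c i < 0 := (hc0 i).lt_or_gt.resolve_right h'
          simp [hσp, sg, h']
          linarith
      · have hrel' : ∑ i, (-c) i • w i = 0 := by
          simp only [Pi.neg_apply, neg_smul]
          rw [Finset.sum_neg_distrib, hrel, neg_zero]
        refine mem_int_of_pos hrel' (fun i => ?_) hs hspan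
        by_cases h' : c i < 0
        · simp [hσm, sg, h', Pi.neg_apply]
        · have hcpos : (0:ℝ) < c i := (hc0 i).lt_or_gt.resolve_left h'
          simp [hσm, sg, h']
          linarith
  have hne : σp ≠ σm := by
    intro h
    have hcf := congrFun h 0
    rcases (hc0 0).lt_or_gt with h0 | h0
    · simp [hσp, hσm, h0, not_lt.mpr h0.le] at hcf
    · simp [hσp, hσm, h0, not_lt.mpr h0.le] at hcf
  calc ∑ σ : Fin 4 → Bool,
      (if (0 : Fin 3 → ℝ) ∈ interior (convexHull ℝ
          (Set.range fun i => if σ i then w i else -(w i))) then (1 : ENNReal) else 0)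
      = ∑ σ : Fin 4 → Bool, (if σ = σp ∨ σ = σm then (1 : ENNReal) else 0) :=
        Finset.sum_congr rfl fun σ _ => if_congr (key σ) rfl rfl
    _ = ((Finset.univ.filter fun σ : Fin 4 → Bool => σ = σp ∨ σ = σm).card : ENNReal) := by
        rw [Finset.sum_boole]
    _ = 2 := by
        rw [Finset.filter_or, Finset.filter_eq', Finset.filter_eq']
        simp only [Finset.mem_univ, if_true]
        rw [Finset.card_union_of_disjoint (by simpa using hne)]
        simp

/-- a nonzero functional vanishing on a proper subspace -/
lemma exists_dot_zero {S : Submodule ℝ (Fin 3 → ℝ)} (hS : S ≠ ⊤) :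
    ∃ u : Fin 3 → ℝ, u ≠ 0 ∧ ∀ x ∈ S, dot u x = 0 := by
  obtain ⟨f, hf0, hfbot⟩ :=
    Submodule.exists_dual_map_eq_bot_of_lt_top (lt_top_iff_ne_top.mpr hS) inferInstance
  set u : Fin 3 → ℝ := fun j => f (fun j' => if j = j' then 1 else 0) with hu
  have hfx : ∀ x, f x = dot u x := by
    intro x
    rw [f.pi_apply_eq_sum_univ x, dot]
    exact Finset.sum_congr rfl fun j _ => by rw [smul_eq_mul, hu]; ring
  refine ⟨u, ?_, fun x hx => ?_⟩
  · intro h0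
    apply hf0
    apply LinearMap.ext fun x => ?_
    rw [hfx, h0]
    simp [dot]
  · rw [← hfx]
    have : f x ∈ S.map f := Submodule.mem_map_of_mem hx
    rwa [hfbot, Submodule.mem_bot] at this

lemma zero_null (μ : Measure (Fin 3 → ℝ))
    (hnd : ∀ u : Fin 3 → ℝ, u ≠ 0 → μ {x | ∑ i, u i * x i = 0} = 0) :
    μ {(0 : Fin 3 → ℝ)} = 0 := by
  have hu : (fun _ : Fin 3 => (1:ℝ)) ≠ 0 := by
    intro h
    have := congrFun h 0
    norm_num at this
  refine measure_mono_null ?_ (hnd _ hu)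
  rintro x rfl
  simp

lemma pair_null (μ : Measure (Fin 3 → ℝ))
    (hnd : ∀ u : Fin 3 → ℝ, u ≠ 0 → μ {x | ∑ i, u i * x i = 0} = 0)
    {a : Fin 3 → ℝ} (ha : a ≠ 0) :
    μ {b | ¬ LinearIndependent ℝ ![a, b]} = 0 := by
  have hS : Submodule.span ℝ {a} ≠ ⊤ := by
    intro h
    have h1 : Module.finrank ℝ (Submodule.span ℝ {a}) = 1 := finrank_span_singleton ha
    rw [h] at h1
    rw [finrank_top] at h1
    simp [Module.finrank_fintype_fun_eq_card] at h1
  obtain ⟨u, hu0, hu⟩ := exists_dot_zero hS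
  refine measure_mono_null ?_ (hnd u hu0)
  intro b hb
  simp only [mem_setOf_eq] at hb ⊢
  rw [Fintype.not_linearIndependent_iff] at hb
  obtain ⟨g, hg, i, hi⟩ := hb
  rw [Fin.sum_univ_two] at hg
  simp only [Matrix.cons_val_zero, Matrix.cons_val_one, Matrix.head_cons] at hg
  have hg1 : g 1 ≠ 0 := by
    intro h1
    have hg0 : g 0 ≠ 0 := by
      fin_cases i
      · exact hi
      · exact absurd h1 hi
    rw [h1, zero_smul, add_zero] at hg
    exact ha ((smul_eq_zero.mp hg).resolve_left hg0)
  have hbval : b = (-(g 0) / g 1) • a := by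
    have h1 : g 1 • b = (-(g 0)) • a := by
      rw [neg_smul]; exact eq_neg_of_add_eq_zero_right hg
    calc b = (g 1)⁻¹ • (g 1 • b) := by rw [smul_smul, inv_mul_cancel₀ hg1, one_smul]
      _ = (g 1)⁻¹ • ((-(g 0)) • a) := by rw [h1]
      _ = (-(g 0) / g 1) • a := by rw [smul_smul, ← div_eq_inv_mul]
  have : dot u b = 0 := by
    rw [hbval, dot_smul_right, hu a (Submodule.mem_span_singleton_self a), mul_zero]
  simpa [dot] using this

lemma triple_slice_null (μ : Measure (Fin 3 → ℝ))
    (hnd : ∀ u : Fin 3 → ℝ, u ≠ 0 → μ {x | ∑ i, u i * x i = 0} = 0)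
    {a b : Fin 3 → ℝ} (hab : LinearIndependent ℝ ![a, b]) :
    μ {x | ¬ LinearIndependent ℝ ![a, b, x]} = 0 := by
  have hS : Submodule.span ℝ (Set.range ![a, b]) ≠ ⊤ := by
    intro h
    have h1 : Module.finrank ℝ (Submodule.span ℝ (Set.range ![a, b])) = 2 := by
      rw [finrank_span_eq_card hab]
      simp
    rw [h, finrank_top] at h1
    simp [Module.finrank_fintype_fun_eq_card] at h1
  obtain ⟨u, hu0, hu⟩ := exists_dot_zero hS
  refine measure_mono_null ?_ (hnd u hu0)
  intro x hx
  simp only [mem_setOf_eq] at hx ⊢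
  rw [Fintype.not_linearIndependent_iff] at hx
  obtain ⟨g, hg, i, hi⟩ := hx
  rw [Fin.sum_univ_three] at hg
  simp only [Matrix.cons_val_zero, Matrix.cons_val_one, Matrix.head_cons,
    Matrix.cons_val_two, Matrix.tail_cons] at hg
  have hg2 : g 2 ≠ 0 := by
    intro h2
    rw [h2, zero_smul, add_zero] at hg
    have := Fintype.linearIndependent_iff.mp hab ![g 0, g 1] (by
      rw [Fin.sum_univ_two]
      simpa using hg)
    have h0 := this 0
    have h1 := this 1
    simp only [Matrix.cons_val_zero, Matrix.cons_val_one, Matrix.head_cons] at h0 h1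
    fin_cases i
    · exact hi h0
    · exact hi h1
    · exact hi h2
  have hmem : x ∈ Submodule.span ℝ (Set.range ![a, b]) := by
    have hxval : x = (-(g 0) / g 2) • a + (-(g 1) / g 2) • b := by
      have h1 : g 2 • x = (-(g 0)) • a + (-(g 1)) • b := by
        rw [neg_smul, neg_smul, ← neg_add]
        exact eq_neg_of_add_eq_zero_right hg
      calc x = (g 2)⁻¹ • (g 2 • x) := by rw [smul_smul, inv_mul_cancel₀ hg2, one_smul]
        _ = (g 2)⁻¹ • ((-(g 0)) • a + (-(g 1)) • b) := by rw [h1]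
        _ = (-(g 0) / g 2) • a + (-(g 1) / g 2) • b := by
            rw [smul_add, smul_smul, smul_smul, ← div_eq_inv_mul, ← div_eq_inv_mul]
    rw [hxval]
    have hamem : a ∈ Submodule.span ℝ (Set.range ![a, b]) :=
      Submodule.subset_span ⟨0, rfl⟩
    have hbmem : b ∈ Submodule.span ℝ (Set.range ![a, b]) :=
      Submodule.subset_span ⟨1, rfl⟩
    exact Submodule.add_mem _ (Submodule.smul_mem _ _ hamem) (Submodule.smul_mem _ _ hbmem)
  have : dot u x = 0 := hu x hmem
  simpa [dot] using this

lemma measurable_notLI :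
    MeasurableSet {v : Fin 3 → (Fin 3 → ℝ) | ¬ LinearIndependent ℝ v} := by
  have hset : {v : Fin 3 → (Fin 3 → ℝ) | ¬ LinearIndependent ℝ v}
      = (fun v : Fin 3 → (Fin 3 → ℝ) => Matrix.det (Matrix.of v)) ⁻¹' {0} := by
    ext v
    simp only [mem_setOf_eq, mem_preimage, mem_singleton_iff]
    have h1 : LinearIndependent ℝ v ↔ IsUnit (Matrix.of v) := by
      have := Matrix.linearIndependent_rows_iff_isUnit (K := ℝ) (A := Matrix.of v)
      simpa using this
    rw [h1, Matrix.isUnit_iff_isUnit_det, isUnit_iff_ne_zero]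
    tauto
  rw [hset]
  have hcont : Continuous fun v : Fin 3 → (Fin 3 → ℝ) => Matrix.det (Matrix.of v) := by
    exact Continuous.matrix_det continuous_id
  exact hcont.measurable (measurableSet_singleton 0)

lemma measurable_cons {n : ℕ} (a : Fin 3 → ℝ) :
    Measurable (fun v : Fin n → (Fin 3 → ℝ) => (Fin.cons a v : Fin (n+1) → (Fin 3 → ℝ))) := by
  apply measurable_pi_lambda
  intro m
  refine Fin.cases ?_ (fun m' => ?_) m
  · simp only [Fin.cons_zero]
    exact measurable_const
  · simp only [Fin.cons_succ]
    exact measurable_pi_apply m'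

/-- Fubini step for `Measure.pi` over `Fin (n+1)`. -/
lemma pi_succ_null {n : ℕ} (μ : Measure (Fin 3 → ℝ)) [IsProbabilityMeasure μ]
    {S : Set (Fin (n+1) → (Fin 3 → ℝ))} (hS : MeasurableSet S)
    (h : ∀ᵐ a ∂μ, Measure.pi (fun _ : Fin n => μ) {v | Fin.cons a v ∈ S} = 0) :
    Measure.pi (fun _ : Fin (n+1) => μ) S = 0 := by
  set e := MeasurableEquiv.piFinSuccAbove (fun _ : Fin (n+1) => (Fin 3 → ℝ)) 0 with he
  have MP := measurePreserving_piFinSuccAbove (fun _ : Fin (n+1) => μ) 0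
  have hSeq : S = e ⁻¹' (e.symm ⁻¹' S) := by
    rw [← Set.preimage_comp]
    simp
  rw [hSeq, MP.measure_preimage (e.symm.measurable hS).nullMeasurableSet]
  rw [Measure.measure_prod_null (e.symm.measurable hS)]
  refine h.mono fun a ha => ?_
  have hset : Prod.mk a ⁻¹' (e.symm ⁻¹' S) = {v | Fin.cons a v ∈ S} := by
    ext v
    simp only [mem_preimage, mem_setOf_eq]
    have : e.symm (a, v) = Fin.cons a v := by
      show (Fin.insertNthEquiv (fun _ : Fin (n+1) => (Fin 3 → ℝ)) 0) (a, v) = Fin.cons a v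
      simp [Fin.insertNthEquiv, Fin.insertNth_zero']
    rw [this]
  show (Measure.pi fun _ : Fin n => μ) (Prod.mk a ⁻¹' (e.symm ⁻¹' S)) = 0
  rw [hset]
  exact ha

/-- pushing the product measure along a coordinate selection -/
lemma map_coords (μ : Measure (Fin 3 → ℝ)) [IsProbabilityMeasure μ] (c : Fin 3 → Fin 4)
    (hc : Function.Injective c) :
    (Measure.pi fun _ : Fin 4 => μ).map (fun w m => w (c m))
      = Measure.pi (fun _ : Fin 3 => μ) := by
  classical
  have hrmeas : Measurable fun (w : Fin 4 → (Fin 3 → ℝ)) m => w (c m) :=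
    measurable_pi_lambda _ fun m => measurable_pi_apply _
  refine (Measure.pi_eq fun s hs => ?_).symm
  rw [Measure.map_apply hrmeas (MeasurableSet.univ_pi hs)]
  set s' : Fin 4 → Set (Fin 3 → ℝ) := fun a => ⋂ m, ⋂ (_ : c m = a), s m with hs'
  have hpre : (fun (w : Fin 4 → (Fin 3 → ℝ)) m => w (c m)) ⁻¹' (Set.pi univ s)
      = Set.pi univ s' := by
    ext w
    simp only [mem_preimage, mem_pi, mem_univ, true_implies, hs', mem_iInter]
    constructor
    · intro h a m hm; subst hm; exact h m
    · intro h m; exact h (c m) m rfl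
  rw [hpre, Measure.pi_pi]
  have hs'im : ∀ m, s' (c m) = s m := by
    intro m
    apply Subset.antisymm
    · intro x hx
      exact (Set.mem_iInter.mp (Set.mem_iInter.mp hx m)) rfl
    · intro x hx
      refine Set.mem_iInter.mpr fun m' => Set.mem_iInter.mpr fun hm' => ?_
      rw [hc hm']
      exact hx
  have hs'out : ∀ a : Fin 4, a ∉ Finset.univ.image c → s' a = univ := by
    intro a ha
    refine Set.eq_univ_of_forall fun x => Set.mem_iInter.mpr fun m => Set.mem_iInter.mpr fun hm => ?_
    exact absurd (Finset.mem_image.mpr ⟨m, Finset.mem_univ m, hm⟩) ha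
  have himg : ∏ a : Fin 4, μ (s' a) = ∏ a ∈ Finset.univ.image c, μ (s' a) := by
    symm
    apply Finset.prod_subset (Finset.subset_univ _)
    intro a _ ha
    rw [hs'out a ha]
    simp
  rw [himg, Finset.prod_image (fun m _ m' _ h => hc h)]
  exact Finset.prod_congr rfl fun m _ => by rw [hs'im m]

lemma notLI_triple_null (μ : Measure (Fin 3 → ℝ)) [IsProbabilityMeasure μ]
    (hnd : ∀ u : Fin 3 → ℝ, u ≠ 0 → μ {x | ∑ i, u i * x i = 0} = 0)
    (i j k : Fin 4) (hij : i ≠ j) (hik : i ≠ k) (hjk : j ≠ k) :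
    (Measure.pi fun _ : Fin 4 => μ) {w | ¬ LinearIndependent ℝ ![w i, w j, w k]} = 0 := by
  have hcinj : Function.Injective ![i, j, k] := by
    intro m m' hmm
    fin_cases m <;> fin_cases m' <;> simp_all
  have hr : Measurable fun (w : Fin 4 → Fin 3 → ℝ) m => w (![i,j,k] m) :=
    measurable_pi_lambda _ fun m => measurable_pi_apply _
  have hBeq : {w : Fin 4 → Fin 3 → ℝ | ¬ LinearIndependent ℝ ![w i, w j, w k]}
      = (fun (w : Fin 4 → Fin 3 → ℝ) m => w (![i,j,k] m)) ⁻¹'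
          {v | ¬ LinearIndependent ℝ v} := by
    ext w
    simp only [mem_setOf_eq, mem_preimage]
    have hv : (fun m => w (![i,j,k] m)) = ![w i, w j, w k] := by
      funext m; fin_cases m <;> rfl
    rw [hv]
  rw [hBeq, ← Measure.map_apply hr measurable_notLI, map_coords μ _ hcinj]
  apply pi_succ_null μ measurable_notLI
  have h0 : ∀ᵐ a ∂μ, a ≠ 0 := by
    rw [ae_iff]
                 -- μ {a | ¬ a ≠ 0} = μ {0}
    have : {a : Fin 3 → ℝ | ¬ a ≠ 0} = {0} := by ext a; simp
    rw [this]
    exact zero_null μ hnd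
  refine h0.mono fun a ha => ?_
  have hmeas2 : MeasurableSet {v : Fin 2 → Fin 3 → ℝ |
      Fin.cons a v ∈ {v : Fin 3 → Fin 3 → ℝ | ¬ LinearIndependent ℝ v}} :=
    measurable_cons a measurable_notLI
  apply pi_succ_null μ hmeas2
  have h1 : ∀ᵐ b ∂μ, LinearIndependent ℝ ![a, b] := by
    rw [ae_iff]
    exact pair_null μ hnd ha
  refine h1.mono fun b hb => ?_
  have hsub : {v : Fin 1 → Fin 3 → ℝ | Fin.cons b v ∈ {v : Fin 2 → Fin 3 → ℝ |
        Fin.cons a v ∈ {v : Fin 3 → Fin 3 → ℝ | ¬ LinearIndependent ℝ v}}}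
      ⊆ Set.pi univ (fun _ : Fin 1 => {x | ¬ LinearIndependent ℝ ![a, b, x]}) := by
    intro v hv
    simp only [mem_setOf_eq] at hv
    have hcv : (Fin.cons a (Fin.cons b v) : Fin 3 → Fin 3 → ℝ) = ![a, b, v 0] := by
      funext m; fin_cases m <;> rfl
    rw [hcv] at hv
    intro m _
    fin_cases m
    exact hv
  refine measure_mono_null hsub ?_
  rw [Measure.pi_pi]
  simp [triple_slice_null μ hnd hb]

lemma gp_ae (μ : Measure (Fin 3 → ℝ)) [IsProbabilityMeasure μ]
    (hnd : ∀ u : Fin 3 → ℝ, u ≠ 0 → μ {x | ∑ i, u i * x i = 0} = 0) :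
    ∀ᵐ w ∂(Measure.pi fun _ : Fin 4 => μ), GP w := by
  rw [ae_iff]
  have hsub : {w : Fin 4 → Fin 3 → ℝ | ¬ GP w} ⊆
      ⋃ i : Fin 4, ⋃ j : Fin 4, ⋃ k : Fin 4,
        {w | i ≠ j ∧ i ≠ k ∧ j ≠ k ∧ ¬ LinearIndependent ℝ ![w i, w j, w k]} := by
    intro w hw
    simp only [mem_setOf_eq, GP] at hw
    push_neg at hw
    obtain ⟨i, j, k, hij, hik, hjk, h⟩ := hw
    exact mem_iUnion.mpr ⟨i, mem_iUnion.mpr ⟨j, mem_iUnion.mpr ⟨k, ⟨hij, hik, hjk, h⟩⟩⟩⟩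
  refine measure_mono_null hsub ?_
  refine measure_iUnion_null fun i => measure_iUnion_null fun j => measure_iUnion_null fun k => ?_
  by_cases hd : i ≠ j ∧ i ≠ k ∧ j ≠ k
  · refine measure_mono_null (fun w hw => hw.2.2.2) ?_
    exact notLI_triple_null μ hnd i j k hd.1 hd.2.1 hd.2.2
  · have : {w : Fin 4 → Fin 3 → ℝ |
        i ≠ j ∧ i ≠ k ∧ j ≠ k ∧ ¬ LinearIndependent ℝ ![w i, w j, w k]} = ∅ := by
      ext w
      simp only [mem_setOf_eq, mem_empty_iff_false, iff_false]
      tauto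
    rw [this]
    exact measure_empty

end

end Wendel

open Wendel

theorem stmt_12 (μ : Measure (Fin 3 → ℝ)) [IsProbabilityMeasure μ]
    (hsymm : μ.map (fun x => -x) = μ)
    (hnd : ∀ u : Fin 3 → ℝ, u ≠ 0 → μ {x | ∑ i, u i * x i = 0} = 0) :
    (Measure.pi fun _ : Fin 4 => μ)
      {w : Fin 4 → (Fin 3 → ℝ) |
        (0 : Fin 3 → ℝ) ∈ interior (convexHull ℝ (Set.range w))} = 1/8 := by
  classical
  set ν := Measure.pi fun _ : Fin 4 => μ with hν
  set A : Set (Fin 4 → Fin 3 → ℝ) :=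
    {w | (0 : Fin 3 → ℝ) ∈ interior (convexHull ℝ (Set.range w))} with hA
  have hAmeas : MeasurableSet A := isOpen_event.measurableSet
  set T : (Fin 4 → Bool) → (Fin 4 → Fin 3 → ℝ) → (Fin 4 → Fin 3 → ℝ) :=
    fun σ w i => if σ i then w i else -(w i) with hT
  have hTmp : ∀ σ, MeasurePreserving (T σ) ν ν := by
    intro σ
    have h : ∀ i : Fin 4,
        MeasurePreserving (fun x : Fin 3 → ℝ => if σ i then x else -x) μ μ := by
      intro i
      by_cases h : σ i
      · simp only [h, if_true]
        exact MeasurePreserving.id μ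
      · simp only [h, if_false]
        exact ⟨measurable_neg, hsymm⟩
    exact measurePreserving_pi _ _ h
  have hTA : ∀ σ, ν (T σ ⁻¹' A) = ν A := fun σ =>
    (hTmp σ).measure_preimage hAmeas.nullMeasurableSet
  have hsum16 : ∑ σ : Fin 4 → Bool, ν (T σ ⁻¹' A) = 16 * ν A := by
    rw [Finset.sum_congr rfl fun σ _ => hTA σ, Finset.sum_const]
    have hcard : (Finset.univ : Finset (Fin 4 → Bool)).card = 16 := by
      simp [Fintype.card_fun]
    rw [hcard]
    simp [nsmul_eq_mul]
  have hsum2 : ∑ σ : Fin 4 → Bool, ν (T σ ⁻¹' A) = 2 := by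
    have hmeasind : ∀ σ : Fin 4 → Bool,
        Measurable ((T σ ⁻¹' A).indicator (fun _ => (1:ENNReal))) :=
      fun σ => measurable_const.indicator ((hTmp σ).measurable hAmeas)
    calc ∑ σ : Fin 4 → Bool, ν (T σ ⁻¹' A)
        = ∑ σ : Fin 4 → Bool, ∫⁻ w, (T σ ⁻¹' A).indicator (fun _ => 1) w ∂ν := by
          refine Finset.sum_congr rfl fun σ _ => ?_
          exact (lintegral_indicator_one ((hTmp σ).measurable hAmeas)).symm
      _ = ∫⁻ w, ∑ σ : Fin 4 → Bool, (T σ ⁻¹' A).indicator (fun _ => 1) w ∂ν := by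
          rw [lintegral_finset_sum _ fun σ _ => hmeasind σ]
      _ = ∫⁻ _, (2:ENNReal) ∂ν := by
          refine lintegral_congr_ae ?_
          refine (gp_ae μ hnd).mono fun w hw => ?_
          have hcount := count_sum hw
          calc ∑ σ : Fin 4 → Bool, (T σ ⁻¹' A).indicator (fun _ => (1:ENNReal)) w
              = ∑ σ : Fin 4 → Bool, (if (0 : Fin 3 → ℝ) ∈ interior (convexHull ℝ
                  (Set.range fun i => if σ i then w i else -(w i)))
                  then (1:ENNReal) else 0) := by
                refine Finset.sum_congr rfl fun σ _ => ?_
                rw [Set.indicator_apply]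
                congr 1
            _ = 2 := hcount
      _ = 2 := by simp
  have h16 : (16:ENNReal) * ν A = 2 := by rw [← hsum16, hsum2]
  have hfinal : ν A = 2 / 16 :=
    (ENNReal.eq_div_iff (by norm_num) (by norm_num)).mpr h16
  have h216 : (2:ENNReal) / 16 = 1 / 8 := by
    rw [ENNReal.div_eq_inv_mul, ENNReal.div_eq_inv_mul]
    rw [show (16:ENNReal) = 8 * 2 by norm_num, ENNReal.mul_inv (by norm_num) (by norm_num)]
    rw [mul_assoc, ENNReal.inv_mul_cancel (by norm_num) (by norm_num), mul_one]
  rw [hfinal, h216]
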